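/- For all real parameters λ > 0 with λ ≠ 1 and φ > 0, and every t > 0, the upper partial first moment of the SMPtW distribution satisfies ∫_t^∞ y · f(y) dy = ((log λ)/(λ − 1)) · Σ_{j=0}^∞ ( (log λ)^j / (j! · (j + 1)^(1 + 1/φ)) ) · ∫_{(j+1)·t^φ}^∞ v^(1/φ) · exp(−v) dv, where f is the SMPtW density. -/

import Mathlib

open Real MeasureTheory

lemma base_integrable {phi : ℝ} (hphi : 0 < phi) {s : ℝ} (hs : 0 ≤ s) :
    IntegrableOn (fun u : ℝ => u ^ (1/phi) * Real.exp (-u)) (Set.Ioi s) := by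
  have h := Real.GammaIntegral_convergent (s := 1 + 1/phi) (by positivity)
  simp only [add_sub_cancel_left] at h
  have h2 : IntegrableOn (fun u : ℝ => u ^ (1/phi) * Real.exp (-u)) (Set.Ioi 0) := by
    refine h.congr_fun (fun x _ => by ring) measurableSet_Ioi
  exact h2.mono_set (Set.Ioi_subset_Ioi hs)

lemma meas_aux (phi c : ℝ) : Measurable (fun u : ℝ => u ^ (1/phi) * Real.exp (-(c * u))) := by
  fun_prop

lemma term_integrable {phi : ℝ} (hphi : 0 < phi) {s : ℝ} (hs : 0 < s) {c : ℝ} (hc : 1 ≤ c) :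
    IntegrableOn (fun u : ℝ => u ^ (1/phi) * Real.exp (-(c * u))) (Set.Ioi s) := by
  refine Integrable.mono (base_integrable hphi hs.le) ((meas_aux phi c).aestronglyMeasurable.restrict) ?_
  filter_upwards [ae_restrict_mem measurableSet_Ioi] with u hu
  have hu0 : 0 < u := hs.trans hu
  rw [Real.norm_eq_abs, Real.norm_eq_abs, abs_of_nonneg (by positivity), abs_of_nonneg (by positivity)]
  have : Real.exp (-(c*u)) ≤ Real.exp (-u) := by
    apply Real.exp_le_exp.2; nlinarith
  exact mul_le_mul_of_nonneg_left this (by positivity)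

lemma lemB {phi : ℝ} (hphi : 0 < phi) {s : ℝ} (hs : 0 < s) {c : ℝ} (hc : 0 < c) :
    ∫ v in Set.Ioi (c * s), v ^ (1/phi) * Real.exp (-v)
      = c ^ (1 + 1/phi) * ∫ u in Set.Ioi s, u ^ (1/phi) * Real.exp (-(c * u)) := by
  have h := integral_comp_mul_left_Ioi (fun v : ℝ => v ^ (1/phi) * Real.exp (-v)) s hc
  rw [smul_eq_mul] at h
  have h2 : (∫ x in Set.Ioi s, (c * x) ^ (1/phi) * Real.exp (-(c * x)))
      = c ^ (1/phi) * ∫ u in Set.Ioi s, u ^ (1/phi) * Real.exp (-(c * u)) := by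
    rw [← MeasureTheory.integral_const_mul]
    refine setIntegral_congr_fun measurableSet_Ioi (fun x hx => ?_)
    have hx0 : 0 < x := hs.trans hx
    rw [Real.mul_rpow hc.le hx0.le]; ring
  rw [h2] at h
  have : (∫ v in Set.Ioi (c*s), v ^ (1/phi) * Real.exp (-v))
      = c * (c⁻¹ * ∫ v in Set.Ioi (c*s), v ^ (1/phi) * Real.exp (-v)) := by
    field_simp
  rw [this, ← h, Real.rpow_add hc, Real.rpow_one]; ring

lemma exp_tsum (x : ℝ) : Real.exp x = ∑' n : ℕ, x ^ n / n.factorial := by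
  rw [Real.exp_eq_exp_ℝ, NormedSpace.exp_eq_tsum_div]

lemma lemC {phi : ℝ} (hphi : 0 < phi) {s : ℝ} (hs : 0 < s) (L : ℝ) :
    ∫ u in Set.Ioi s, u ^ (1/phi) * Real.exp (L * Real.exp (-u) - u)
      = ∑' j : ℕ, (L ^ j / (j.factorial : ℝ)) *
          ∫ u in Set.Ioi s, u ^ (1/phi) * Real.exp (-(((j:ℝ)+1) * u)) := by
  set F : ℕ → ℝ → ℝ := fun j u => (L ^ j / (j.factorial : ℝ)) * (u ^ (1/phi) * Real.exp (-(((j:ℝ)+1) * u))) with hF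
  have hptw : ∀ u : ℝ, (∑' j : ℕ, F j u) = u ^ (1/phi) * Real.exp (L * Real.exp (-u) - u) := by
    intro u
    have h1 : ∀ j : ℕ, F j u = (u ^ (1/phi) * Real.exp (-u)) * ((L * Real.exp (-u)) ^ j / (j.factorial : ℝ)) := by
      intro j
      have : Real.exp (-(((j:ℝ)+1) * u)) = Real.exp (-u) * (Real.exp (-u)) ^ j := by
        rw [← Real.exp_nat_mul, ← Real.exp_add]; ring_nf
      rw [hF]; simp only []
      rw [this, mul_pow]; ring
    rw [tsum_congr h1, tsum_mul_left, ← exp_tsum, Real.exp_sub, Real.exp_neg]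
    ring
  have hcj : ∀ j : ℕ, (1:ℝ) ≤ (j:ℝ) + 1 := fun j => by have := Nat.cast_nonneg (α := ℝ) j; linarith
  have hint : ∀ j : ℕ, Integrable (F j) (volume.restrict (Set.Ioi s)) := by
    intro j
    exact ((term_integrable hphi hs (hcj j)).const_mul _)
  have hbase := base_integrable hphi hs.le
  have hKnn : 0 ≤ ∫ u in Set.Ioi s, u ^ (1/phi) * Real.exp (-u) := by
    refine setIntegral_nonneg measurableSet_Ioi (fun u hu => ?_)
    have : 0 < u := hs.trans hu; positivity
  have hnorm_le : ∀ j : ℕ, (∫ u in Set.Ioi s, ‖F j u‖)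
      ≤ (|L| ^ j / (j.factorial : ℝ)) * ∫ u in Set.Ioi s, u ^ (1/phi) * Real.exp (-u) := by
    intro j
    rw [← integral_const_mul]
    refine setIntegral_mono_on (hint j).norm (hbase.const_mul _) measurableSet_Ioi (fun u hu => ?_)
    have hu0 : 0 < u := hs.trans hu
    rw [hF]; simp only []
    rw [Real.norm_eq_abs, abs_mul, abs_div, abs_pow, abs_mul, Nat.abs_cast,
      abs_of_nonneg (by positivity : (0:ℝ) ≤ u ^ (1/phi)), abs_of_nonneg (Real.exp_nonneg _)]
    have hexp : Real.exp (-(((j:ℝ)+1) * u)) ≤ Real.exp (-u) := by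
      apply Real.exp_le_exp.2; nlinarith [hcj j]
    calc |L| ^ j / (j.factorial:ℝ) * (u ^ (1/phi) * Real.exp (-(((j:ℝ)+1)*u)))
        ≤ |L| ^ j / (j.factorial:ℝ) * (u ^ (1/phi) * Real.exp (-u)) := by
          refine mul_le_mul_of_nonneg_left (mul_le_mul_of_nonneg_left hexp (by positivity)) (by positivity)
      _ = _ := by ring
  have hsum : Summable (fun j : ℕ => ∫ u in Set.Ioi s, ‖F j u‖) := by
    refine Summable.of_nonneg_of_le (fun j => ?_) hnorm_le
      (((Real.summable_pow_div_factorial |L|).mul_right _))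
    exact integral_nonneg (fun u => norm_nonneg _)
  have key := MeasureTheory.integral_tsum_of_summable_integral_norm hint hsum
  calc ∫ u in Set.Ioi s, u ^ (1/phi) * Real.exp (L * Real.exp (-u) - u)
      = ∫ u in Set.Ioi s, ∑' j : ℕ, F j u :=
        (setIntegral_congr_fun measurableSet_Ioi (fun u _ => (hptw u))).symm
    _ = ∑' j : ℕ, ∫ u in Set.Ioi s, F j u := key.symm
    _ = _ := tsum_congr (fun j => by rw [hF]; exact integral_const_mul _ _)

lemma lemA {phi t : ℝ} (hphi : 0 < phi) (ht : 0 < t) (L : ℝ) :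
    ∫ y in Set.Ioi t, phi * y ^ (phi - 1) *
        ((y ^ phi) ^ (1/phi) * Real.exp (L * Real.exp (-(y ^ phi)) - y ^ phi))
      = ∫ u in Set.Ioi (t ^ phi), u ^ (1/phi) * Real.exp (L * Real.exp (-u) - u) := by
  set G : ℝ → ℝ := fun u => u ^ (1/phi) * Real.exp (L * Real.exp (-u) - u) with hG
  have hts : (0:ℝ) < t ^ phi := Real.rpow_pos_of_pos ht phi
  have h1 := integral_comp_rpow_Ioi_of_pos (g := Set.indicator (Set.Ioi (t ^ phi)) G) hphi
  have hrhs : (∫ y in Set.Ioi (0:ℝ), Set.indicator (Set.Ioi (t ^ phi)) G y)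
      = ∫ u in Set.Ioi (t ^ phi), G u := by
    rw [integral_indicator measurableSet_Ioi, Measure.restrict_restrict measurableSet_Ioi,
      Set.inter_eq_left.mpr (Set.Ioi_subset_Ioi hts.le)]
  have hlhs : (∫ x in Set.Ioi (0:ℝ), (phi * x ^ (phi - 1)) • Set.indicator (Set.Ioi (t ^ phi)) G (x ^ phi))
      = ∫ y in Set.Ioi t, phi * y ^ (phi - 1) * G (y ^ phi) := by
    rw [setIntegral_congr_fun measurableSet_Ioi
      (g := Set.indicator (Set.Ioi t) (fun y => phi * y ^ (phi - 1) * G (y ^ phi))) ?_]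
    · rw [integral_indicator measurableSet_Ioi, Measure.restrict_restrict measurableSet_Ioi,
        Set.inter_eq_left.mpr (Set.Ioi_subset_Ioi ht.le)]
    · intro x hx
      have hx0 : (0:ℝ) < x := hx
      have hiff : x ^ phi ∈ Set.Ioi (t ^ phi) ↔ x ∈ Set.Ioi t := by
        simp only [Set.mem_Ioi]
        exact Real.rpow_lt_rpow_iff ht.le hx0.le hphi
      dsimp only
      by_cases hmem : x ∈ Set.Ioi t
      · rw [Set.indicator_of_mem (hiff.mpr hmem), Set.indicator_of_mem hmem, smul_eq_mul]
      · rw [Set.indicator_of_notMem (fun h => hmem (hiff.mp h)), Set.indicator_of_notMem hmem,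
          smul_zero]
  rw [hlhs, hrhs] at h1
  exact h1

/-- The SMPtW probability density function with parameters `lam > 0`, `lam ≠ 1`, `phi > 0`. -/
noncomputable def smptwPDF (lam phi y : ℝ) : ℝ :=
  (Real.log lam * phi * y ^ (phi - 1) *
    Real.exp (Real.log lam * Real.exp (-(y ^ phi)) - y ^ phi)) / (lam - 1)

/-- the upper partial first moment of the SMPtW distribution
(appearing in the mean residual life). -/
theorem smptw_upper_partial_moment (lam phi : ℝ)
    (hlam : 0 < lam) (hlam1 : lam ≠ 1) (hphi : 0 < phi)
    (t : ℝ) (ht : 0 < t) :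
    ∫ y in Set.Ioi t, y * smptwPDF lam phi y =
      (Real.log lam / (lam - 1)) *
        ∑' j : ℕ,
          ((Real.log lam) ^ j /
              ((j.factorial : ℝ) * ((j : ℝ) + 1) ^ (1 + 1 / phi))) *
            ∫ v in Set.Ioi (((j : ℝ) + 1) * t ^ phi),
              v ^ (1 / phi) * Real.exp (-v) := by
  set L := Real.log lam with hL
  have hl1 : lam - 1 ≠ 0 := sub_ne_zero.mpr hlam1
  have hts : (0:ℝ) < t ^ phi := Real.rpow_pos_of_pos ht phi
  have h1 : (∫ y in Set.Ioi t, y * smptwPDF lam phi y)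
      = (L / (lam - 1)) * ∫ y in Set.Ioi t, phi * y ^ (phi - 1) *
          ((y ^ phi) ^ (1/phi) * Real.exp (L * Real.exp (-(y ^ phi)) - y ^ phi)) := by
    rw [← integral_const_mul]
    refine setIntegral_congr_fun measurableSet_Ioi (fun y hy => ?_)
    have hy0 : 0 < y := ht.trans hy
    rw [smptwPDF, one_div, Real.rpow_rpow_inv hy0.le hphi.ne', ← hL]
    field_simp
  rw [h1, lemA hphi ht L, lemC hphi hts L]
  congr 1
  refine tsum_congr (fun j => ?_)
  have hc : (0:ℝ) < (j:ℝ) + 1 := by positivity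
  rw [lemB hphi hts hc]
  have hpow : ((j:ℝ) + 1) ^ (1 + 1/phi) ≠ 0 := (Real.rpow_pos_of_pos hc _).ne'
  have hfac : ((j.factorial : ℝ)) ≠ 0 := Nat.cast_ne_zero.mpr j.factorial_ne_zero
  field_simp
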